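/- Weighted interpolation estimate for block operators on cones: Let ℋ be a complex Hilbert space, I and J finite index sets, and T : ℋ^{|I|} → ℋ^{|J|} the bounded operator with block entries T_{ji} (bounded operators on ℋ), i.e. (TΨ)_j = ∑_{i∈I} T_{ji} Ψ_i. Let v = {v_i}_{i∈I}, w = {w_j}_{j∈J} be weights with V^{−1} ≤ v_i, w_j ≤ V for some V ≥ 1, let O : ℋ → ℋ be a bounded operator, let θ ≥ 0, and define the cone 𝒞(O,θ) = {Ψ ∈ ℋ^{|I|} : ‖OΨ_i − Ψ_i‖ ≤ θ‖Ψ‖₂ for all i ∈ I}. Set c_O(T) = max_{i∈I, j∈J} v_i w_j ‖T_{ji} O‖ and let ‖T‖_{2,2} be the operator norm of T from ℓ²(ℋ^{|I|}) to ℓ²(ℋ^{|J|}). Then for every Ψ ∈ 𝒞(O,θ) and every t ∈ [0,1]: ‖TΨ‖^{(w)}_{2/(1−t)} ≤ ( c_O(T) + |I| V² θ ‖T‖_{2,2} )^t · ‖T‖_{2,2}^{1−t} · ‖Ψ‖^{(v)}_{2/(1+t)}. -/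

import Mathlib

open Real Finset

section scalarIdentities

variable {t x y : ℝ}

lemma wip_I1 (ht0 : 0 ≤ t) (hx : 0 < x) (hy : 0 < y) :
    (((x*y) ^ ((2/(1+t))/2)) ^ (-t) * y) ^ 2
      = x ^ (2/(1+t) - 2) * y ^ (2/(1+t)) := by
  have h1 : (1:ℝ) + t ≠ 0 := by linarith
  rw [← Real.exp_log hx, ← Real.exp_log hy]
  simp only [← Real.rpow_natCast, ← Real.exp_mul, ← Real.exp_add, ← Real.exp_neg,
    Real.exp_eq_exp]
  push_cast; field_simp; ring

lemma wip_I2 (ht0 : 0 ≤ t) (hx : 0 < x) (hy : 0 < y) :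
    x⁻¹ * (((x*y) ^ ((2/(1+t))/2)) ^ (1-t) * y)
      = x ^ (2/(1+t) - 2) * y ^ (2/(1+t)) := by
  have h1 : (1:ℝ) + t ≠ 0 := by linarith
  rw [← Real.exp_log hx, ← Real.exp_log hy]
  simp only [← Real.rpow_natCast, ← Real.exp_mul, ← Real.exp_add, ← Real.exp_neg,
    Real.exp_eq_exp]
  push_cast; field_simp; ring

lemma wip_I3 (ht0 : 0 ≤ t) (ht1 : t < 1) (hx : 0 < x) (hy : 0 < y) :
    ((x*y) ^ ((2/(1+t))/2)) ^ (1-t)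
      = (x ^ 2 * (x ^ (2/(1+t) - 2) * y ^ (2/(1+t)))) ^ ((1-t)/2) := by
  have h1 : (1:ℝ) + t ≠ 0 := by linarith
  have h2 : (1:ℝ) - t ≠ 0 := by linarith
  rw [← Real.exp_log hx, ← Real.exp_log hy]
  simp only [← Real.rpow_natCast, ← Real.exp_mul, ← Real.exp_add, ← Real.exp_neg,
    Real.exp_eq_exp]
  push_cast; field_simp
  ring

lemma wip_I4 (ht0 : 0 ≤ t) (hx : 0 < x) (hy : 0 < y) :
    y ^ 2 = x ^ (2*t) * ((x ^ (2/(1+t) - 2) * y ^ (2/(1+t))) ^ t *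
      (x ^ (2/(1+t) - 2) * y ^ (2/(1+t)))) := by
  have h1 : (1:ℝ) + t ≠ 0 := by linarith
  rw [← Real.exp_log hx, ← Real.exp_log hy]
  simp only [← Real.rpow_natCast, ← Real.exp_mul, ← Real.exp_add, ← Real.exp_neg,
    Real.exp_eq_exp]
  push_cast; field_simp; ring

lemma wip_I5 (ht1 : t < 1) (hx : 0 < x) (hy : 0 < y) :
    ((x ^ (2/(1-t) - 2) * y ^ (2/(1-t) - 1)) * ((x*y) ^ ((2/(1-t))/2)) ^ (-t)) ^ 2
      = x ^ (2/(1-t) - 2) * y ^ (2/(1-t)) := by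
  have h1 : (1:ℝ) - t ≠ 0 := by linarith
  rw [← Real.exp_log hx, ← Real.exp_log hy]
  simp only [← Real.rpow_natCast, ← Real.exp_mul, ← Real.exp_add, ← Real.exp_neg,
    Real.exp_eq_exp]
  push_cast; field_simp; ring

lemma wip_I6 (ht1 : t < 1) (hx : 0 < x) (hy : 0 < y) :
    (x ^ (2/(1-t) - 2) * y ^ (2/(1-t) - 1)) * ((x*y) ^ ((2/(1-t))/2)) ^ (1-t)
      = (x ^ (2/(1-t) - 2) * y ^ (2/(1-t))) * x := by
  have h1 : (1:ℝ) - t ≠ 0 := by linarith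
  rw [← Real.exp_log hx, ← Real.exp_log hy]
  simp only [← Real.rpow_natCast, ← Real.exp_mul, ← Real.exp_add, ← Real.exp_neg,
    Real.exp_eq_exp]
  push_cast; field_simp; ring

lemma wip_I7 (ht1 : t < 1) (hx : 0 < x) (hy : 0 < y) :
    (x ^ (2/(1-t) - 2) * y ^ (2/(1-t) - 1)) * y
      = x ^ (2/(1-t) - 2) * y ^ (2/(1-t)) := by
  have h1 : (1:ℝ) - t ≠ 0 := by linarith
  rw [← Real.exp_log hx, ← Real.exp_log hy]
  simp only [← Real.rpow_natCast, ← Real.exp_mul, ← Real.exp_add, ← Real.exp_neg,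
    Real.exp_eq_exp]
  push_cast; field_simp; ring

lemma wip_I8 {V S : ℝ} (hV : 0 < V) (hS : 0 < S) :
    (V ^ 2 * S) ^ ((1-t)/2) * (V ^ t * S ^ ((1+t)/2)) = V * S := by
  rw [← Real.exp_log hV, ← Real.exp_log hS]
  simp only [← Real.rpow_natCast, ← Real.exp_mul, ← Real.exp_add, ← Real.exp_neg,
    Real.exp_eq_exp]
  push_cast; ring

lemma wip_I9 {V S : ℝ} (hV : 0 < V) (hS : 0 < S) :
    V ^ (2*t) * (S ^ t * S) = (V ^ t * S ^ ((1+t)/2)) ^ 2 := by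
  rw [← Real.exp_log hV, ← Real.exp_log hS]
  simp only [← Real.rpow_natCast, ← Real.exp_mul, ← Real.exp_add, ← Real.exp_neg,
    Real.exp_eq_exp]
  push_cast; ring

end scalarIdentities

lemma wip_rpow_le {r s : ℝ} (hr : 0 < r) (hs : -1 ≤ s) (hs1 : s ≤ 1) :
    r ^ s ≤ r + r⁻¹ := by
  rcases le_total 1 r with h | h
  · calc r ^ s ≤ r ^ (1:ℝ) := Real.rpow_le_rpow_of_exponent_le h hs1
    _ = r := Real.rpow_one r
    _ ≤ r + r⁻¹ := le_add_of_nonneg_right (by positivity)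
  · calc r ^ s ≤ r ^ (-1:ℝ) := Real.rpow_le_rpow_of_exponent_ge hr h hs
    _ = r⁻¹ := by rw [Real.rpow_neg_one]
    _ ≤ r + r⁻¹ := le_add_of_nonneg_left (by positivity)

lemma wip_apply_le {H : Type*} [NormedAddCommGroup H] {J : Type*} [Fintype J]
    (x : PiLp 2 fun _ : J => H) (j : J) : ‖x j‖ ≤ ‖x‖ := by
  rw [PiLp.norm_eq_of_L2]
  exact (Real.le_sqrt (norm_nonneg _) (Finset.sum_nonneg fun i _ => sq_nonneg _)).mpr
    (Finset.single_le_sum (fun i _ => sq_nonneg ‖x i‖) (Finset.mem_univ j))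


/-- The weighted `ℓ^p` norm `‖Ψ‖_p^{(v)} = (∑_i v_i^{p-2} ‖Ψ_i‖^p)^{1/p}` of a finite
family of vectors in a normed space. -/
noncomputable def wNorm {H : Type*} [NormedAddCommGroup H] {I : Type*} [Fintype I]
    (v : I → ℝ) (p : ℝ) (Ψ : I → H) : ℝ :=
  (∑ i, v i ^ (p - 2) * ‖Ψ i‖ ^ p) ^ (1 / p)

set_option maxHeartbeats 2000000 in
/-- **Weighted interpolation estimate for block operators on cones.**
Let `T : ℋ^{|I|} → ℋ^{|J|}` be the bounded block operator `(TΨ)_j = ∑_i T_{ji} Ψ_i`,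
let `v`, `w` be weights in `[V⁻¹, V]`, `O` a bounded operator, `θ ≥ 0`, and let
`c_O(T) = max_{i,j} v_i w_j ‖T_{ji} O‖`.  Then for every `Ψ` in the cone
`𝒞(O,θ) = {Ψ : ‖OΨ_i − Ψ_i‖ ≤ θ‖Ψ‖₂ ∀i}` and every `t ∈ [0,1)`,
`‖TΨ‖^{(w)}_{2/(1−t)} ≤ (c_O(T) + |I|V²θ‖T‖_{2,2})^t ‖T‖_{2,2}^{1−t} ‖Ψ‖^{(v)}_{2/(1+t)}`. -/
theorem weighted_interpolation_cone
    {H : Type*} [NormedAddCommGroup H] [InnerProductSpace ℂ H] [CompleteSpace H]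
    {I J : Type*} [Fintype I] [Fintype J] [Nonempty I] [Nonempty J]
    (Tb : J → I → (H →L[ℂ] H))
    (T : (PiLp 2 fun _ : I => H) →L[ℂ] (PiLp 2 fun _ : J => H))
    (hT : ∀ (Ψ : PiLp 2 fun _ : I => H) (j : J), T Ψ j = ∑ i, Tb j i (Ψ i))
    (v : I → ℝ) (w : J → ℝ) (V : ℝ) (hV : 1 ≤ V)
    (hv : ∀ i, V⁻¹ ≤ v i ∧ v i ≤ V) (hw : ∀ j, V⁻¹ ≤ w j ∧ w j ≤ V)
    (O : H →L[ℂ] H) (θ : ℝ) (hθ : 0 ≤ θ)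
    (Ψ : PiLp 2 fun _ : I => H)
    (hΨ : ∀ i, ‖O (Ψ i) - Ψ i‖ ≤ θ * ‖Ψ‖)
    (t : ℝ) (ht0 : 0 ≤ t) (ht1 : t < 1) :
    wNorm w (2 / (1 - t)) (T Ψ) ≤
      ((⨆ p : I × J, v p.1 * w p.2 * ‖(Tb p.2 p.1).comp O‖) +
          (Fintype.card I : ℝ) * V ^ 2 * θ * ‖T‖) ^ t *
        ‖T‖ ^ (1 - t) * wNorm v (2 / (1 + t)) Ψ := by
  classical
  have h1t : (0:ℝ) < 1 + t := by linarith
  have h1t' : (0:ℝ) < 1 - t := by linarith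
  have hq0 : (0:ℝ) < 2/(1-t) := by positivity
  have hp0 : (0:ℝ) < 2/(1+t) := by positivity
  have hV0 : (0:ℝ) < V := lt_of_lt_of_le one_pos hV
  have hv0 : ∀ i, 0 < v i := fun i => lt_of_lt_of_le (by positivity) (hv i).1
  have hw0 : ∀ j, 0 < w j := fun j => lt_of_lt_of_le (by positivity) (hw j).1
  set c : ℝ := ⨆ p : I × J, v p.1 * w p.2 * ‖(Tb p.2 p.1).comp O‖ with hc
  have hcsup : ∀ i j, v i * w j * ‖(Tb j i).comp O‖ ≤ c := fun i j =>
    le_ciSup (f := fun p : I × J => v p.1 * w p.2 * ‖(Tb p.2 p.1).comp O‖)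
      (Set.Finite.bddAbove (Set.finite_range _)) (⟨i, j⟩ : I × J)
  have hc0 : 0 ≤ c := by
    refine le_trans ?_ (hcsup (Classical.arbitrary I) (Classical.arbitrary J))
    have := hv0 (Classical.arbitrary I); have := hw0 (Classical.arbitrary J)
    positivity
  set C : ℝ := c + (Fintype.card I : ℝ) * V ^ 2 * θ * ‖T‖ with hC
  have hC0 : 0 ≤ C := by
    have : (0:ℝ) ≤ (Fintype.card I : ℝ) * V ^ 2 * θ * ‖T‖ := by positivity
    linarith
  simp only [wNorm]
  rw [one_div_div, one_div_div]
  by_cases hA0 : T Ψ = 0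
  · rw [hA0]
    have hne : ((1:ℝ)-t)/2 ≠ 0 := by positivity
    simp only [PiLp.zero_apply, norm_zero, Real.zero_rpow (ne_of_gt hq0), mul_zero,
      Finset.sum_const_zero, Real.zero_rpow hne]
    exact mul_nonneg (mul_nonneg (Real.rpow_nonneg hC0 _) (Real.rpow_nonneg (norm_nonneg T) _))
      (Real.rpow_nonneg (Finset.sum_nonneg fun i _ => mul_nonneg
        (Real.rpow_nonneg (hv0 i).le _) (Real.rpow_nonneg (norm_nonneg _) _)) _)
  have hΨ0 : Ψ ≠ 0 := by
    intro h; exact hA0 (by rw [h, map_zero])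
  set A : PiLp 2 (fun _ : J => H) := T Ψ with hAdef
  obtain ⟨j0, hj0⟩ : ∃ j, A j ≠ 0 := by
    by_contra hcon; push_neg at hcon; exact hA0 (PiLp.ext hcon)
  obtain ⟨i0, hi0⟩ : ∃ i, Ψ i ≠ 0 := by
    by_contra hcon; push_neg at hcon; exact hΨ0 (PiLp.ext hcon)
  set S : ℝ := ∑ i, v i ^ (2/(1+t) - 2) * ‖Ψ i‖ ^ (2/(1+t)) with hSdef
  set K : ℝ := ∑ j, w j ^ (2/(1-t) - 2) * ‖A j‖ ^ (2/(1-t)) with hKdef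
  have hhnn : ∀ i, 0 ≤ v i ^ (2/(1+t) - 2) * ‖Ψ i‖ ^ (2/(1+t)) := fun i =>
    mul_nonneg (Real.rpow_nonneg (hv0 i).le _) (Real.rpow_nonneg (norm_nonneg _) _)
  have hknn : ∀ j, 0 ≤ w j ^ (2/(1-t) - 2) * ‖A j‖ ^ (2/(1-t)) := fun j =>
    mul_nonneg (Real.rpow_nonneg (hw0 j).le _) (Real.rpow_nonneg (norm_nonneg _) _)
  have hS0 : 0 < S := Finset.sum_pos' (fun i _ => hhnn i) ⟨i0, Finset.mem_univ _,
    mul_pos (Real.rpow_pos_of_pos (hv0 i0) _)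
      (Real.rpow_pos_of_pos (norm_pos_iff.mpr hi0) _)⟩
  have hK0 : 0 < K := Finset.sum_pos' (fun j _ => hknn j) ⟨j0, Finset.mem_univ _,
    mul_pos (Real.rpow_pos_of_pos (hw0 j0) _)
      (Real.rpow_pos_of_pos (norm_pos_iff.mpr hj0) _)⟩
  have hTb : ∀ (j : J) (i : I) (y : H), ‖Tb j i y‖ ≤ ‖T‖ * ‖y‖ := by
    intro j i y
    set Y : PiLp 2 (fun _ : I => H) := (WithLp.equiv 2 (∀ _ : I, H)).symm (Pi.single i y)
      with hY
    have h1 : T Y j = Tb j i y := by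
      rw [hT, Finset.sum_eq_single i
        (fun i' _ hne => by
          rw [hY, WithLp.equiv_symm_apply, PiLp.toLp_apply, Pi.single_eq_of_ne hne, map_zero])
        (fun hmem => absurd (Finset.mem_univ i) hmem), hY, WithLp.equiv_symm_apply, PiLp.toLp_apply,
        Pi.single_eq_same]
    have h2 : ‖Y‖ = ‖y‖ := by
      rw [hY, PiLp.norm_eq_of_L2, Finset.sum_eq_single i
        (fun i' _ hne => by simp [Pi.single_eq_of_ne hne, hne])
        (fun hmem => absurd (Finset.mem_univ i) hmem)]
      simp
    calc ‖Tb j i y‖ = ‖T Y j‖ := by rw [h1]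
      _ ≤ ‖T Y‖ := wip_apply_le _ j
      _ ≤ ‖T‖ * ‖Y‖ := T.le_opNorm _
      _ = ‖T‖ * ‖y‖ := by rw [h2]
  have hTbΨ : ∀ (j : J) (i : I),
      ‖Tb j i (Ψ i)‖ ≤ ‖(Tb j i).comp O‖ * ‖Ψ i‖ + ‖T‖ * (θ * ‖Ψ‖) := by
    intro j i
    have h1 : Tb j i (Ψ i) = (Tb j i).comp O (Ψ i) - Tb j i (O (Ψ i) - Ψ i) := by
      rw [ContinuousLinearMap.comp_apply, map_sub]; abel
    rw [h1]
    refine le_trans (norm_sub_le _ _)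
      (add_le_add (ContinuousLinearMap.le_opNorm _ _) (le_trans (hTb j i _) ?_))
    exact mul_le_mul_of_nonneg_left (hΨ i) (norm_nonneg (T : _ →L[ℂ] _))
  set d : I → ℝ := fun i => (v i * ‖Ψ i‖) ^ ((2/(1+t))/2) with hd
  set e : J → ℝ := fun j => (w j * ‖A j‖) ^ ((2/(1-t))/2) with he
  set b : J → ℝ := fun j => w j ^ (2/(1-t) - 2) * ‖A j‖ ^ (2/(1-t) - 1) with hb
  set φ : J → H := fun j => ((‖A j‖ : ℂ))⁻¹ • A j with hφ
  set m : I → ℂ → ℂ := fun i z => Complex.exp ((z - (t:ℂ)) * (Real.log (d i) : ℂ)) with hm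
  set g : J → ℂ → ℂ := fun j z => Complex.exp ((z - (t:ℂ)) * (Real.log (e j) : ℂ)) with hg
  set I' : Finset I := Finset.univ.filter (fun i => Ψ i ≠ 0) with hI'
  set J' : Finset J := Finset.univ.filter (fun j => A j ≠ 0) with hJ'
  set Φ : ℂ → PiLp 2 (fun _ : I => H) := fun z => WithLp.toLp 2 (fun i => m i z • Ψ i) with hΦ
  set F : ℂ → ℂ := fun z =>
    ∑ j ∈ J', (b j : ℂ) * g j z *
      ∑ i ∈ I', m i z * (inner ℂ (φ j) (Tb j i (Ψ i)) : ℂ) with hF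
  have hI'mem : ∀ i ∈ I', Ψ i ≠ 0 := fun i hi => (Finset.mem_filter.mp hi).2
  have hJ'mem : ∀ j ∈ J', A j ≠ 0 := fun j hj => (Finset.mem_filter.mp hj).2
  have hdpos : ∀ i ∈ I', 0 < d i := fun i hi =>
    Real.rpow_pos_of_pos (mul_pos (hv0 i) (norm_pos_iff.mpr (hI'mem i hi))) _
  have hepos : ∀ j ∈ J', 0 < e j := fun j hj =>
    Real.rpow_pos_of_pos (mul_pos (hw0 j) (norm_pos_iff.mpr (hJ'mem j hj))) _
  have hbnn : ∀ j, 0 ≤ b j := fun j =>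
    mul_nonneg (Real.rpow_nonneg (hw0 j).le _) (Real.rpow_nonneg (norm_nonneg _) _)
  have hmnorm : ∀ i ∈ I', ∀ z : ℂ, ‖m i z‖ = d i ^ (z.re - t) := by
    intro i hi z
    rw [hm, Complex.norm_exp, Real.rpow_def_of_pos (hdpos i hi)]
    congr 1
    simp [Complex.mul_re]
    ring
  have hgnorm : ∀ j ∈ J', ∀ z : ℂ, ‖g j z‖ = e j ^ (z.re - t) := by
    intro j hj z
    rw [hg, Complex.norm_exp, Real.rpow_def_of_pos (hepos j hj)]
    congr 1
    simp [Complex.mul_re]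
    ring
  have hφnorm : ∀ j ∈ J', ∀ x : H, ‖(inner ℂ (φ j) x : ℂ)‖ ≤ ‖x‖ := by
    intro j hj x
    have h1 : ‖φ j‖ = 1 := by
      rw [hφ]
      simp only []
      rw [norm_smul, norm_inv, Complex.norm_real, Real.norm_eq_abs,
        abs_of_nonneg (norm_nonneg _), inv_mul_cancel₀ (norm_ne_zero_iff.mpr (hJ'mem j hj))]
    calc ‖(inner ℂ (φ j) x : ℂ)‖ ≤ ‖φ j‖ * ‖x‖ := norm_inner_le_norm _ _
    _ = ‖x‖ := by rw [h1, one_mul]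
  have hsum_k_le : ∑ j ∈ J', w j ^ (2/(1-t) - 2) * ‖A j‖ ^ (2/(1-t)) ≤ K :=
    Finset.sum_le_sum_of_subset_of_nonneg (Finset.subset_univ _) fun j _ _ => hknn j
  have hsum_h_le : ∑ i ∈ I', v i ^ (2/(1+t) - 2) * ‖Ψ i‖ ^ (2/(1+t)) ≤ S :=
    Finset.sum_le_sum_of_subset_of_nonneg (Finset.subset_univ _) fun i _ _ => hhnn i
  have hΦapp : ∀ (z : ℂ) (i : I), Φ z i = m i z • Ψ i := fun z i => by rw [hΦ]
  have hregroup : ∀ z : ℂ, F z = ∑ j ∈ J', (b j : ℂ) * g j z *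
      (inner ℂ (φ j) (T (Φ z) j) : ℂ) := by
    intro z
    simp only [hF]
    refine Finset.sum_congr rfl fun j hj => ?_
    congr 1
    rw [hT (Φ z) j, inner_sum]
    rw [← Finset.sum_subset (Finset.subset_univ I') (fun i _ hi => ?_)]
    · refine Finset.sum_congr rfl fun i _ => ?_
      rw [hΦapp z i, map_smul, inner_smul_right]
    · have hΨi : Ψ i = 0 := by
        by_contra hne
        exact hi (Finset.mem_filter.mpr ⟨Finset.mem_univ i, hne⟩)
      rw [hΦapp z i, hΨi, smul_zero, map_zero, inner_zero_right]
  have hΨle : ‖Ψ‖ ≤ V ^ t * S ^ ((1+t)/2) := by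
    have h2 : ‖Ψ‖^2 ≤ (V ^ t * S ^ ((1+t)/2))^2 := by
      rw [PiLp.norm_sq_eq_of_L2]
      have hperi : ∀ i : I, ‖Ψ i‖^2 ≤
          V^(2*t) * (S^t * (v i ^ (2/(1+t)-2) * ‖Ψ i‖^(2/(1+t)))) := by
        intro i
        by_cases hi : Ψ i = 0
        · simp [hi, Real.zero_rpow (ne_of_gt hp0)]
        · have hyi : 0 < ‖Ψ i‖ := norm_pos_iff.mpr hi
          have hhpos : 0 < v i ^ (2/(1+t)-2) * ‖Ψ i‖^(2/(1+t)) :=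
            mul_pos (Real.rpow_pos_of_pos (hv0 i) _) (Real.rpow_pos_of_pos hyi _)
          have hhle : v i ^ (2/(1+t)-2) * ‖Ψ i‖^(2/(1+t)) ≤ S := by
            rw [hSdef]
            exact Finset.single_le_sum (fun i _ => hhnn i) (Finset.mem_univ i)
          calc ‖Ψ i‖^2
              = v i ^ (2*t) * ((v i ^ (2/(1+t)-2) * ‖Ψ i‖^(2/(1+t)))^t *
                  (v i ^ (2/(1+t)-2) * ‖Ψ i‖^(2/(1+t)))) :=
                wip_I4 ht0 (hv0 i) hyi
            _ ≤ V^(2*t) * (S^t * (v i ^ (2/(1+t)-2) * ‖Ψ i‖^(2/(1+t)))) := by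
                refine mul_le_mul (Real.rpow_le_rpow (hv0 i).le (hv i).2 (by positivity))
                  (mul_le_mul_of_nonneg_right
                    (Real.rpow_le_rpow hhpos.le hhle ht0) hhpos.le)
                  (mul_nonneg (Real.rpow_nonneg hhpos.le _) hhpos.le)
                  (Real.rpow_nonneg hV0.le _)
      calc ∑ i, ‖Ψ i‖^2
          ≤ ∑ i, V^(2*t) * (S^t * (v i ^ (2/(1+t)-2) * ‖Ψ i‖^(2/(1+t)))) :=
            Finset.sum_le_sum fun i _ => hperi i
        _ = V^(2*t) * (S^t * S) := by
            rw [← Finset.mul_sum, ← Finset.mul_sum, ← hSdef]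
        _ = (V ^ t * S ^ ((1+t)/2))^2 := wip_I9 hV0 hS0
    have h3 := Real.sqrt_le_sqrt h2
    rwa [Real.sqrt_sq (norm_nonneg _), Real.sqrt_sq (by positivity)] at h3
  have hdV : ∀ i ∈ I', d i ^ (1-t) * ‖Ψ‖ ≤ V * S := by
    intro i hi
    have hyi : 0 < ‖Ψ i‖ := norm_pos_iff.mpr (hI'mem i hi)
    have hhle : v i ^ (2/(1+t)-2) * ‖Ψ i‖^(2/(1+t)) ≤ S := by
      rw [hSdef]
      exact Finset.single_le_sum (fun i _ => hhnn i) (Finset.mem_univ i)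
    have h3 : d i ^ (1-t) ≤ (V^2 * S) ^ ((1-t)/2) := by
      rw [hd]
      rw [wip_I3 ht0 ht1 (hv0 i) hyi]
      refine Real.rpow_le_rpow (mul_nonneg (sq_nonneg _) (hhnn i)) ?_ (by linarith)
      refine mul_le_mul (by
        have := (hv i).2
        have := (hv0 i).le
        nlinarith) hhle (hhnn i) (by positivity)
    calc d i ^ (1-t) * ‖Ψ‖
        ≤ (V^2*S)^((1-t)/2) * (V^t * S^((1+t)/2)) :=
          mul_le_mul h3 hΨle (norm_nonneg _) (by positivity)
      _ = V * S := wip_I8 hV0 hS0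
  have hF0 : ∀ z : ℂ, z.re = 0 → ‖F z‖ ≤ Real.sqrt (K * (‖T‖ ^ 2 * S)) := by
    intro z hz
    rw [hregroup z]
    have hγ : ∀ j ∈ J', ‖(b j : ℂ) * g j z‖ = b j * e j ^ (-t) := by
      intro j hj
      rw [norm_mul, Complex.norm_real, Real.norm_eq_abs, abs_of_nonneg (hbnn j),
        hgnorm j hj, hz, zero_sub]
    have step1 : ‖∑ j ∈ J', (b j : ℂ) * g j z * (inner ℂ (φ j) (T (Φ z) j) : ℂ)‖
        ≤ ∑ j ∈ J', (b j * e j ^ (-t)) * ‖T (Φ z) j‖ := by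
      refine le_trans (norm_sum_le _ _) (Finset.sum_le_sum fun j hj => ?_)
      rw [norm_mul, hγ j hj]
      exact mul_le_mul_of_nonneg_left (hφnorm j hj _)
        (mul_nonneg (hbnn j) (Real.rpow_nonneg (hepos j hj).le _))
    have hP : ∑ j ∈ J', (b j * e j ^ (-t))^2 ≤ K := by
      refine le_trans (le_of_eq (Finset.sum_congr rfl fun j hj => ?_)) hsum_k_le
      simp only [hb, he]
      exact wip_I5 ht1 (hw0 j) (norm_pos_iff.mpr (hJ'mem j hj))
    have hΦsq : ∀ i : I, ‖Φ z i‖^2 ≤ v i ^ (2/(1+t)-2) * ‖Ψ i‖^(2/(1+t)) := by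
      intro i
      by_cases hi : Ψ i = 0
      · rw [hΦapp z i, hi, smul_zero, norm_zero]
        simp [hi, Real.zero_rpow (ne_of_gt hp0)]
      · have hi' : i ∈ I' := Finset.mem_filter.mpr ⟨Finset.mem_univ i, hi⟩
        have hn : ‖Φ z i‖ = d i ^ (-t) * ‖Ψ i‖ := by
          rw [hΦapp z i, norm_smul, hmnorm i hi', hz, zero_sub]
        rw [hn]
        simp only [hd]
        exact le_of_eq (wip_I1 ht0 (hv0 i) (norm_pos_iff.mpr hi))
    have hQ : ∑ j ∈ J', ‖T (Φ z) j‖^2 ≤ ‖T‖^2 * S := by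
      calc ∑ j ∈ J', ‖T (Φ z) j‖^2 ≤ ∑ j, ‖T (Φ z) j‖^2 :=
        Finset.sum_le_sum_of_subset_of_nonneg (Finset.subset_univ _) fun j _ _ => sq_nonneg _
      _ = ‖T (Φ z)‖^2 := (PiLp.norm_sq_eq_of_L2 _ _).symm
      _ ≤ (‖T‖ * ‖Φ z‖)^2 := pow_le_pow_left₀ (norm_nonneg _) (T.le_opNorm (Φ z)) 2
      _ = ‖T‖^2 * ‖Φ z‖^2 := mul_pow _ _ 2
      _ ≤ ‖T‖^2 * S := by
          refine mul_le_mul_of_nonneg_left ?_ (sq_nonneg _)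
          rw [PiLp.norm_sq_eq_of_L2, hSdef]
          exact Finset.sum_le_sum fun i _ => hΦsq i
    have hX0 : 0 ≤ ∑ j ∈ J', (b j * e j ^ (-t)) * ‖T (Φ z) j‖ :=
      Finset.sum_nonneg fun j hj => mul_nonneg
        (mul_nonneg (hbnn j) (Real.rpow_nonneg (hepos j hj).le _)) (norm_nonneg _)
    refine le_trans step1 ((Real.le_sqrt hX0
      (mul_nonneg hK0.le (mul_nonneg (sq_nonneg _) hS0.le))).mpr ?_)
    exact le_trans (Finset.sum_mul_sq_le_sq_mul_sq J' _ _)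
      (mul_le_mul hP hQ (Finset.sum_nonneg fun j _ => sq_nonneg _) hK0.le)
  have hθT : 0 ≤ θ * ‖T‖ := mul_nonneg hθ (norm_nonneg T)
  have hF1 : ∀ z : ℂ, z.re = 1 → ‖F z‖ ≤ K * (C * S) := by
    intro z hz
    have hCS0 : 0 ≤ C * S := mul_nonneg hC0 hS0.le
    have hperj : ∀ j ∈ J', ‖(b j : ℂ) * g j z *
        ∑ i ∈ I', m i z * (inner ℂ (φ j) (Tb j i (Ψ i)) : ℂ)‖
        ≤ (w j ^ (2/(1-t) - 2) * ‖A j‖ ^ (2/(1-t))) * (C * S) := by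
      intro j hj
      have hAj : A j ≠ 0 := hJ'mem j hj
      have hkj0 : 0 ≤ w j ^ (2/(1-t) - 2) * ‖A j‖ ^ (2/(1-t)) := hknn j
      have hbe : b j * e j ^ (1-t) = (w j ^ (2/(1-t)-2) * ‖A j‖^(2/(1-t))) * w j := by
        simp only [hb, he]
        exact wip_I6 ht1 (hw0 j) (norm_pos_iff.mpr hAj)
      have hin : ∀ i ∈ I', ‖m i z * (inner ℂ (φ j) (Tb j i (Ψ i)) : ℂ)‖
          ≤ d i ^ (1-t) * (‖(Tb j i).comp O‖ * ‖Ψ i‖ + ‖T‖ * (θ * ‖Ψ‖)) := by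
        intro i hi
        rw [norm_mul, hmnorm i hi, hz]
        exact mul_le_mul_of_nonneg_left
          (le_trans (hφnorm j hj _) (hTbΨ j i)) (Real.rpow_nonneg (hdpos i hi).le _)
      have hwi : ∀ i ∈ I',
          w j * (d i ^ (1-t) * (‖(Tb j i).comp O‖ * ‖Ψ i‖ + ‖T‖ * (θ * ‖Ψ‖)))
          ≤ c * (v i ^ (2/(1+t)-2) * ‖Ψ i‖^(2/(1+t))) + V^2*θ*‖T‖*S := by
        intro i hi
        have hyi : 0 < ‖Ψ i‖ := norm_pos_iff.mpr (hI'mem i hi)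
        have hdnn : 0 ≤ d i ^ (1-t) := Real.rpow_nonneg (hdpos i hi).le _
        have hrn : 0 ≤ (v i)⁻¹ * (d i ^ (1-t) * ‖Ψ i‖) :=
          mul_nonneg (inv_nonneg.mpr (hv0 i).le) (mul_nonneg hdnn (norm_nonneg _))
        have part1 : w j * (d i ^ (1-t) * (‖(Tb j i).comp O‖ * ‖Ψ i‖))
            ≤ c * (v i ^ (2/(1+t)-2) * ‖Ψ i‖^(2/(1+t))) := by
          have h4 : (v i)⁻¹ * (d i ^ (1-t) * ‖Ψ i‖)
              = v i ^ (2/(1+t)-2) * ‖Ψ i‖^(2/(1+t)) := by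
            simp only [hd]
            exact wip_I2 ht0 (hv0 i) hyi
          have hvne : v i ≠ 0 := ne_of_gt (hv0 i)
          have heq : w j * (d i ^ (1-t) * (‖(Tb j i).comp O‖ * ‖Ψ i‖))
              = (v i * w j * ‖(Tb j i).comp O‖) * ((v i)⁻¹ * (d i ^ (1-t) * ‖Ψ i‖)) := by
            field_simp
          rw [heq]
          calc (v i * w j * ‖(Tb j i).comp O‖) * ((v i)⁻¹ * (d i ^ (1-t) * ‖Ψ i‖))
              ≤ c * ((v i)⁻¹ * (d i ^ (1-t) * ‖Ψ i‖)) :=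
                mul_le_mul_of_nonneg_right (hcsup i j) hrn
            _ = c * (v i ^ (2/(1+t)-2) * ‖Ψ i‖^(2/(1+t))) := by rw [h4]
        have part2 : w j * (d i ^ (1-t) * (‖T‖ * (θ * ‖Ψ‖))) ≤ V^2*θ*‖T‖*S := by
          calc w j * (d i ^ (1-t) * (‖T‖ * (θ * ‖Ψ‖)))
              = w j * (θ * ‖T‖) * (d i ^ (1-t) * ‖Ψ‖) := by ring
            _ ≤ V * (θ * ‖T‖) * (V * S) := by
                refine mul_le_mul (mul_le_mul (hw j).2 le_rfl hθT hV0.le) (hdV i hi)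
                  (mul_nonneg hdnn (norm_nonneg _)) (mul_nonneg hV0.le hθT)
            _ = V^2*θ*‖T‖*S := by ring
        calc w j * (d i ^ (1-t) * (‖(Tb j i).comp O‖ * ‖Ψ i‖ + ‖T‖ * (θ * ‖Ψ‖)))
            = w j * (d i ^ (1-t) * (‖(Tb j i).comp O‖ * ‖Ψ i‖))
              + w j * (d i ^ (1-t) * (‖T‖ * (θ * ‖Ψ‖))) := by ring
          _ ≤ c * (v i ^ (2/(1+t)-2) * ‖Ψ i‖^(2/(1+t))) + V^2*θ*‖T‖*S :=
            add_le_add part1 part2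
      calc ‖(b j : ℂ) * g j z * ∑ i ∈ I', m i z * (inner ℂ (φ j) (Tb j i (Ψ i)) : ℂ)‖
          = (b j * e j ^ (1-t)) * ‖∑ i ∈ I', m i z * (inner ℂ (φ j) (Tb j i (Ψ i)) : ℂ)‖ := by
            rw [norm_mul, norm_mul, Complex.norm_real, Real.norm_eq_abs,
              abs_of_nonneg (hbnn j), hgnorm j hj, hz]
        _ ≤ (b j * e j ^ (1-t)) * ∑ i ∈ I',
              d i ^ (1-t) * (‖(Tb j i).comp O‖ * ‖Ψ i‖ + ‖T‖ * (θ * ‖Ψ‖)) := by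
            refine mul_le_mul_of_nonneg_left
              (le_trans (norm_sum_le _ _) (Finset.sum_le_sum hin))
              (mul_nonneg (hbnn j) (Real.rpow_nonneg (hepos j hj).le _))
        _ = (w j ^ (2/(1-t)-2) * ‖A j‖^(2/(1-t))) * ∑ i ∈ I',
              w j * (d i ^ (1-t) * (‖(Tb j i).comp O‖ * ‖Ψ i‖ + ‖T‖ * (θ * ‖Ψ‖))) := by
            rw [hbe, mul_assoc, Finset.mul_sum]
        _ ≤ (w j ^ (2/(1-t)-2) * ‖A j‖^(2/(1-t))) * ∑ i ∈ I',
              (c * (v i ^ (2/(1+t)-2) * ‖Ψ i‖^(2/(1+t))) + V^2*θ*‖T‖*S) :=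
            mul_le_mul_of_nonneg_left (Finset.sum_le_sum hwi) hkj0
        _ ≤ (w j ^ (2/(1-t)-2) * ‖A j‖^(2/(1-t))) * (C * S) := by
            refine mul_le_mul_of_nonneg_left ?_ hkj0
            rw [Finset.sum_add_distrib, ← Finset.mul_sum, Finset.sum_const, nsmul_eq_mul]
            have hb1 : c * (∑ i ∈ I', v i ^ (2/(1+t)-2) * ‖Ψ i‖^(2/(1+t))) ≤ c * S :=
              mul_le_mul_of_nonneg_left hsum_h_le hc0
            have hb2 : (I'.card : ℝ) * (V^2*θ*‖T‖*S)
                ≤ (Fintype.card I : ℝ) * (V^2*θ*‖T‖*S) := by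
              refine mul_le_mul_of_nonneg_right ?_ ?_
              · exact_mod_cast Finset.card_filter_le _ _
              · have h9 : (0:ℝ) ≤ V^2 := sq_nonneg V
                have h10 : (0:ℝ) ≤ V^2*θ := mul_nonneg h9 hθ
                have h11 : (0:ℝ) ≤ V^2*θ*‖T‖ := mul_nonneg h10 (norm_nonneg T)
                exact mul_nonneg h11 hS0.le
            have hCfin : C * S = c * S + (Fintype.card I : ℝ) * (V^2*θ*‖T‖*S) := by
              rw [hC]; ring
            linarith
    simp only [hF]
    calc ‖∑ j ∈ J', (b j : ℂ) * g j z *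
          ∑ i ∈ I', m i z * (inner ℂ (φ j) (Tb j i (Ψ i)) : ℂ)‖
        ≤ ∑ j ∈ J', ‖(b j : ℂ) * g j z *
          ∑ i ∈ I', m i z * (inner ℂ (φ j) (Tb j i (Ψ i)) : ℂ)‖ := norm_sum_le _ _
      _ ≤ ∑ j ∈ J', (w j ^ (2/(1-t) - 2) * ‖A j‖ ^ (2/(1-t))) * (C * S) :=
          Finset.sum_le_sum hperj
      _ = (∑ j ∈ J', w j ^ (2/(1-t) - 2) * ‖A j‖ ^ (2/(1-t))) * (C * S) :=
          (Finset.sum_mul _ _ _).symm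
      _ ≤ K * (C * S) := mul_le_mul_of_nonneg_right hsum_k_le hCS0
  have hdiff : DiffContOnCl ℂ F (Complex.HadamardThreeLines.verticalStrip 0 1) := by
    refine Differentiable.diffContOnCl ?_
    rw [hF]
    refine Differentiable.fun_sum fun j _ => ?_
    refine Differentiable.mul (Differentiable.mul (differentiable_const _) ?_) ?_
    · simp only [hg]
      exact ((differentiable_id.sub (differentiable_const _)).mul (differentiable_const _)).cexp
    · refine Differentiable.fun_sum fun i _ => ?_
      refine Differentiable.mul ?_ (differentiable_const _)
      simp only [hm]
      exact ((differentiable_id.sub (differentiable_const _)).mul (differentiable_const _)).cexp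
  have hBdd : BddAbove ((norm ∘ F) '' (Complex.HadamardThreeLines.verticalClosedStrip 0 1)) := by
    refine ⟨∑ j ∈ J', (b j * (e j + (e j)⁻¹)) *
      ∑ i ∈ I', (d i + (d i)⁻¹) * ‖(inner ℂ (φ j) (Tb j i (Ψ i)) : ℂ)‖, ?_⟩
    rintro r ⟨z, hz, rfl⟩
    have hzre : z.re ∈ Set.Icc (0:ℝ) 1 := hz
    have hs1 : -1 ≤ z.re - t := by have := hzre.1; linarith
    have hs2 : z.re - t ≤ 1 := by have := hzre.2; linarith
    simp only [Function.comp_apply, hF]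
    refine le_trans (norm_sum_le _ _) (Finset.sum_le_sum fun j hj => ?_)
    rw [norm_mul, norm_mul, Complex.norm_real, Real.norm_eq_abs, abs_of_nonneg (hbnn j),
      hgnorm j hj]
    refine mul_le_mul (mul_le_mul_of_nonneg_left (wip_rpow_le (hepos j hj) hs1 hs2) (hbnn j))
      (le_trans (norm_sum_le _ _) (Finset.sum_le_sum fun i hi => ?_)) (norm_nonneg _)
      (mul_nonneg (hbnn j)
        (add_nonneg (hepos j hj).le (inv_nonneg.mpr (hepos j hj).le)))
    rw [norm_mul, hmnorm i hi]
    exact mul_le_mul_of_nonneg_right (wip_rpow_le (hdpos i hi) hs1 hs2) (norm_nonneg _)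
  have hFt : F (t:ℂ) = (K : ℂ) := by
    have hsub : ∀ j ∈ J', (∑ i ∈ I', (inner ℂ (φ j) (Tb j i (Ψ i)) : ℂ)) = inner ℂ (φ j) (A j) := by
      intro j hj
      rw [← inner_sum]
      congr 1
      rw [Finset.sum_subset (Finset.subset_univ I') (fun i _ hi => ?_)]
      · rw [hAdef, hT]
      · have hΨi : Ψ i = 0 := by
          by_contra hne
          exact hi (Finset.mem_filter.mpr ⟨Finset.mem_univ i, hne⟩)
        rw [hΨi, map_zero]
    have hm1 : ∀ i, m i (t:ℂ) = 1 := fun i => by rw [hm]; simp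
    have hg1 : ∀ j, g j (t:ℂ) = 1 := fun j => by rw [hg]; simp
    simp only [hF]
    calc ∑ j ∈ J', (b j : ℂ) * g j (t:ℂ) *
          ∑ i ∈ I', m i (t:ℂ) * (inner ℂ (φ j) (Tb j i (Ψ i)) : ℂ)
        = ∑ j ∈ J', ((w j ^ (2/(1-t) - 2) * ‖A j‖ ^ (2/(1-t)) : ℝ) : ℂ) := by
          refine Finset.sum_congr rfl fun j hj => ?_
          rw [hg1, mul_one,
            show (∑ i ∈ I', m i (t:ℂ) * (inner ℂ (φ j) (Tb j i (Ψ i)):ℂ))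
              = ∑ i ∈ I', (inner ℂ (φ j) (Tb j i (Ψ i)):ℂ) from
              Finset.sum_congr rfl fun i _ => by rw [hm1, one_mul],
            hsub j hj]
          have hAj := hJ'mem j hj
          have hne : (‖A j‖ : ℂ) ≠ 0 := Complex.ofReal_ne_zero.mpr (norm_ne_zero_iff.mpr hAj)
          have hip : (inner ℂ (φ j) (A j) : ℂ) = (‖A j‖ : ℂ) := by
            rw [hφ]
            simp only []
            rw [inner_smul_left, map_inv₀, Complex.conj_ofReal, inner_self_eq_norm_sq_to_K]
            field_simp
            rfl
          rw [hip, hb]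
          have h7 := wip_I7 (x := w j) (y := ‖A j‖) ht1 (hw0 j) (norm_pos_iff.mpr hAj)
          rw [← h7]
          push_cast
          ring
      _ = (K : ℂ) := by
          rw [hKdef]
          push_cast
          refine Finset.sum_subset (Finset.subset_univ J') (fun j _ hj => ?_)
          have hAj : A j = 0 := by
            by_contra hne
            exact hj (Finset.mem_filter.mpr ⟨Finset.mem_univ j, hne⟩)
          rw [hAj]
          simp [Real.zero_rpow (ne_of_gt hq0)]
  have hmem : (t:ℂ) ∈ Complex.HadamardThreeLines.verticalClosedStrip 0 1 := by
    show (t:ℂ).re ∈ Set.Icc (0:ℝ) 1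
    rw [Complex.ofReal_re]
    exact ⟨ht0, ht1.le⟩
  have key := Complex.HadamardThreeLines.norm_le_interp_of_mem_verticalClosedStrip₀₁' F hmem
    hdiff hBdd (fun z hz => hF0 z hz) (fun z hz => hF1 z hz)
  rw [hFt] at key
  simp only [Complex.ofReal_re, Complex.norm_real, Real.norm_eq_abs,
    abs_of_pos hK0] at key
  -- key : K ≤ √(K * (‖T‖^2 * S)) ^ (1 - t) * (K * (C * S)) ^ t
  have hsqrt : Real.sqrt (K * (‖T‖^2 * S)) = K ^ ((1:ℝ)/2) * (‖T‖ * S ^ ((1:ℝ)/2)) := by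
    rw [Real.sqrt_mul hK0.le, Real.sqrt_mul (sq_nonneg ‖T‖), Real.sqrt_sq (norm_nonneg T),
      Real.sqrt_eq_rpow, Real.sqrt_eq_rpow]
  rw [hsqrt] at key
  have hexp : (K ^ ((1:ℝ)/2) * (‖T‖ * S ^ ((1:ℝ)/2))) ^ (1-t) * (K * (C * S)) ^ t
      = K ^ ((1+t)/2) * (C^t * ‖T‖^(1-t) * S^((1+t)/2)) := by
    rw [Real.mul_rpow (Real.rpow_nonneg hK0.le _)
        (mul_nonneg (norm_nonneg T) (Real.rpow_nonneg hS0.le _)),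
      Real.mul_rpow (norm_nonneg T) (Real.rpow_nonneg hS0.le _),
      Real.mul_rpow hK0.le (mul_nonneg hC0 hS0.le),
      Real.mul_rpow hC0 hS0.le,
      ← Real.rpow_mul hK0.le, ← Real.rpow_mul hS0.le]
    have eK : K ^ ((1:ℝ)/2 * (1-t)) * K ^ t = K ^ ((1+t)/2) := by
      rw [← Real.rpow_add hK0]; congr 1; ring
    have eS : S ^ ((1:ℝ)/2 * (1-t)) * S ^ t = S ^ ((1+t)/2) := by
      rw [← Real.rpow_add hS0]; congr 1; ring
    calc K ^ ((1:ℝ)/2 * (1-t)) * (‖T‖^(1-t) * S ^ ((1:ℝ)/2 * (1-t))) * (K^t * (C^t * S^t))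
        = (K ^ ((1:ℝ)/2 * (1-t)) * K ^ t)
          * ((S ^ ((1:ℝ)/2 * (1-t)) * S ^ t) * (‖T‖^(1-t) * C^t)) := by ring
      _ = K ^ ((1+t)/2) * (C^t * ‖T‖^(1-t) * S^((1+t)/2)) := by rw [eK, eS]; ring
  have key2 : K ≤ K ^ ((1+t)/2) * (C^t * ‖T‖^(1-t) * S^((1+t)/2)) :=
    le_trans key (le_of_eq hexp)
  clear key
  have key := key2
  rw [show (1-t)/2 = 1 - (1+t)/2 by ring, Real.rpow_sub hK0, Real.rpow_one,
    div_le_iff₀ (Real.rpow_pos_of_pos hK0 _)]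
  calc K ≤ K ^ ((1+t)/2) * (C^t * ‖T‖^(1-t) * S^((1+t)/2)) := key
    _ = C ^ t * ‖T‖ ^ (1-t) * S ^ ((1+t)/2) * K ^ ((1+t)/2) := by ring
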